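/- Let k = 1, so that Λ_1 = [1/4, 1) and φ_1^min = π/3. Then for every φ ∈ (π/3, π], the point λ_{1,1}^{φ,min} = (5 − 4cos φ)/(6 − 6cos φ) lies in [1/4, 1), it is a local minimum point of the function λ ↦ P_1^φ(λ), and it is the only local minimum point of P_1^φ in [1/4, 1). -/

import Mathlib

/-- The success probability `P_k^φ(λ)` of the matched-phase Grover algorithm after
`k` iterations: `P_k^φ(λ) = A·cos((2k+1)δ) + B` where `θ = arcsin √λ`,
`δ = arccos (1 − λ(1 − cos φ))`, `A = (sin²θ/sin²δ)(cos φ − cos δ)` and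
`B = (sin²θ/sin²δ)(1 − cos φ·cos δ)`. -/
noncomputable def grovP (k : ℕ) (φ lam : ℝ) : ℝ :=
  let θ : ℝ := Real.arcsin (Real.sqrt lam)
  let δ : ℝ := Real.arccos (1 - lam * (1 - Real.cos φ))
  let A : ℝ := Real.sin θ ^ 2 / Real.sin δ ^ 2 * (Real.cos φ - Real.cos δ)
  let B : ℝ := Real.sin θ ^ 2 / Real.sin δ ^ 2 * (1 - Real.cos φ * Real.cos δ)
  A * Real.cos ((2 * (k : ℝ) + 1) * δ) + B

/-- `φ_k^min = arccos(1 − (2 − 2cos(π/(2k+1)))/(1 − cos(π/(2k−1))))`. -/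
noncomputable def phiMin (k : ℕ) : ℝ :=
  Real.arccos (1 - (2 - 2 * Real.cos (Real.pi / (2 * (k : ℝ) + 1))) /
    (1 - Real.cos (Real.pi / (2 * (k : ℝ) - 1))))

set_option maxHeartbeats 1000000 in
/-- On (0,1) (with cos φ < 1), `grovP 1 φ` equals an explicit cubic. -/
lemma grov_eq (φ lam : ℝ) (h0 : 0 < lam) (h1 : lam < 1) (hu : Real.cos φ < 1) :
    grovP 1 φ lam = 4*(1-Real.cos φ)^2*lam^3 - 4*(1-Real.cos φ)*(2-Real.cos φ)*lam^2
      + (5-4*Real.cos φ)*lam := by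
  have hu2 : -1 ≤ Real.cos φ := Real.neg_one_le_cos φ
  set u := Real.cos φ with hudef
  set c : ℝ := 1 - lam * (1 - u) with hc
  have hx0 : 0 < lam * (1 - u) := by nlinarith
  have hx2 : lam * (1 - u) < 2 := by nlinarith
  have hc1 : -1 < c := by simp [hc]; linarith
  have hc2 : c < 1 := by simp [hc]; linarith
  have hsq : (0:ℝ) < 1 - c^2 := by nlinarith
  have hcosd : Real.cos (Real.arccos c) = c := Real.cos_arccos hc1.le hc2.le
  have hsind : Real.sin (Real.arccos c) ^ 2 = 1 - c^2 := by
    rw [Real.sin_arccos, Real.sq_sqrt hsq.le]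
  have hsint : Real.sin (Real.arcsin (Real.sqrt lam)) ^ 2 = lam := by
    rw [Real.sin_arcsin (by linarith [Real.sqrt_nonneg lam]) (Real.sqrt_le_one.mpr h1.le),
      Real.sq_sqrt h0.le]
  have h3 : (2 * ((1:ℕ):ℝ) + 1) * Real.arccos c = 3 * Real.arccos c := by norm_num
  simp only [grovP, ← hudef, ← hc, h3, Real.cos_three_mul, hcosd, hsint, hsind]
  rw [hc] at hsq ⊢
  field_simp
  ring

set_option maxHeartbeats 1000000 in
/-- For k = 1 (so Λ_1 = [1/4,1) and φ_1^min = π/3), for every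
φ ∈ (π/3, π] the point λ_{1,1}^{φ,min} = (5 − 4cos φ)/(6 − 6cos φ) lies in
[1/4, 1), is a local minimum point of λ ↦ P_1^φ(λ), and is the only local
minimum point of P_1^φ in [1/4, 1). -/
theorem unique_local_min_for_one_iteration
    (φ : ℝ) (hφ : φ ∈ Set.Ioc (Real.pi / 3) Real.pi)
    (lamMin : ℝ) (hlamMin : lamMin = (5 - 4 * Real.cos φ) / (6 - 6 * Real.cos φ)) :
    lamMin ∈ Set.Ico (1 / 4 : ℝ) 1 ∧
      IsLocalMin (grovP 1 φ) lamMin ∧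
      ∀ lam ∈ Set.Ico (1 / 4 : ℝ) 1, IsLocalMin (grovP 1 φ) lam → lam = lamMin := by
  obtain ⟨hφ1, hφ2⟩ := hφ
  have hpi : (0:ℝ) < Real.pi := Real.pi_pos
  have hu1 : Real.cos φ < 1/2 := by
    have := Real.cos_lt_cos_of_nonneg_of_le_pi (by positivity) hφ2 hφ1
    rwa [Real.cos_pi_div_three] at this
  have hu2 : -1 ≤ Real.cos φ := Real.neg_one_le_cos φ
  set u := Real.cos φ with hudef
  set q : ℝ → ℝ := fun x => 4*(1-u)^2*x^3 - 4*(1-u)*(2-u)*x^2 + (5-4*u)*x with hq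
  have hden : (0:ℝ) < 6 - 6*u := by linarith
  have h1u : (1:ℝ) - u ≠ 0 := by linarith
  have hmem : lamMin ∈ Set.Ico (1 / 4 : ℝ) 1 := by
    constructor
    · rw [hlamMin, le_div_iff₀ hden]; linarith
    · rw [hlamMin, div_lt_one hden]; linarith
  have hm0 : (0:ℝ) < lamMin := lt_of_lt_of_le (by norm_num) hmem.1
  have hm1 : lamMin < 1 := hmem.2
  -- λ₋ = 1/(2-2u)
  set lm : ℝ := 1/(2-2*u) with hlm
  have hlm0 : (0:ℝ) < 2 - 2*u := by linarith
  have hlmpos : 0 < lm := by positivity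
  have hlmlt : lm < lamMin := by
    rw [hlm, hlamMin, div_lt_div_iff₀ hlm0 hden]; nlinarith
  have hlm1 : lm < 1 := by rw [hlm, div_lt_one hlm0]; linarith
  -- key identity around lamMin
  have key1 : ∀ x : ℝ, q x - q lamMin = 4*(1-u)^2*(x-lamMin)^2*(x - (1+u)/(3-3*u)) := by
    intro x
    rw [hq, hlamMin]
    have h3 : (3:ℝ) - 3*u ≠ 0 := by linarith
    field_simp
    ring
  -- key identity around lm
  have key2 : ∀ x : ℝ, q x - q lm = 4*(1-u)^2*(x-lm)^2*(x - 1) := by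
    intro x
    rw [hq, hlm]
    field_simp
    ring
  have hrlt : (1+u)/(3-3*u) < lm := by
    rw [hlm, div_lt_div_iff₀ (by linarith) hlm0]; nlinarith
  have hloc : IsLocalMin (grovP 1 φ) lamMin := by
    have hnb : Set.Ioo lm 1 ∈ nhds lamMin := Ioo_mem_nhds hlmlt hm1
    filter_upwards [hnb] with x hx
    rw [grov_eq φ lamMin hm0 hm1 (by linarith), grov_eq φ x (hlmpos.trans hx.1) hx.2 (by linarith)]
    have h1 : q lamMin ≤ q x := by
      have hk := key1 x
      have h4 : (0:ℝ) ≤ 4*(1-u)^2*(x-lamMin)^2 := by positivity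
      have h5 : (0:ℝ) ≤ x - (1+u)/(3-3*u) := by linarith [hx.1]
      have h6 := mul_nonneg h4 h5
      have h7 : 0 ≤ q x - q lamMin := hk ▸ h6
      linarith [h7]
    simpa [hq] using h1
  refine ⟨hmem, hloc, ?_⟩
  intro lam hlam hminl
  have hl0 : (0:ℝ) < lam := lt_of_lt_of_le (by norm_num) hlam.1
  have hl1 : lam < 1 := hlam.2
  have heq : grovP 1 φ =ᶠ[nhds lam] q := by
    filter_upwards [Ioo_mem_nhds hl0 hl1] with x hx
    rw [grov_eq φ x hx.1 hx.2 (by linarith)]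
  have hminq : IsLocalMin q lam := hminl.congr heq
  have hder : HasDerivAt q (12*(1-u)^2*lam^2 - 8*(1-u)*(2-u)*lam + (5-4*u)) lam := by
    have h1 := (((hasDerivAt_pow 3 lam).const_mul (4*(1-u)^2)).sub
      ((hasDerivAt_pow 2 lam).const_mul (4*(1-u)*(2-u)))).add
      ((hasDerivAt_id lam).const_mul (5-4*u))
    refine h1.congr_deriv ?_
    push_cast
    ring
  have hd0 : 12*(1-u)^2*lam^2 - 8*(1-u)*(2-u)*lam + (5-4*u) = 0 := by
    rw [← hder.deriv]
    exact hminq.deriv_eq_zero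
  have hfac : 12*(1-u)^2 * ((lam - lm) * (lam - lamMin)) = 0 := by
    have expand : 12*(1-u)^2 * ((lam - 1/(2-2*u)) * (lam - (5-4*u)/(6-6*u)))
        = 12*(1-u)^2*lam^2 - 8*(1-u)*(2-u)*lam + (5-4*u) := by
      field_simp
      ring
    rw [hlm, hlamMin, expand]
    exact hd0
  have hne : (12:ℝ)*(1-u)^2 ≠ 0 := by nlinarith
  rcases mul_eq_zero.mp hfac with h | h
  · exact absurd h hne
  rcases mul_eq_zero.mp h with h | h
  · -- lam = lm : contradiction, lm is a strict local max
    exfalso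
    have hlameq : lam = lm := by linarith [sub_eq_zero.mp h]
    rw [hlameq] at hminq
    obtain ⟨ε, hε, hball⟩ := Metric.mem_nhds_iff.mp hminq
    set x : ℝ := lm + min (ε/2) ((1-lm)/2) with hxdef
    have hmin0 : 0 < min (ε/2) ((1-lm)/2) := by
      apply lt_min <;> [linarith; linarith]
    have hxball : x ∈ Metric.ball lm ε := by
      simp only [Metric.mem_ball, Real.dist_eq, hxdef]
      rw [abs_of_pos (by linarith)]
      simp only [add_sub_cancel_left]
      calc min (ε/2) ((1-lm)/2) ≤ ε/2 := min_le_left _ _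
        _ < ε := by linarith
    have hle : q lm ≤ q x := hball hxball
    have hx1 : x < 1 := by
      have : min (ε/2) ((1-lm)/2) ≤ (1-lm)/2 := min_le_right _ _
      rw [hxdef]; linarith
    have hxne : x - lm = min (ε/2) ((1-lm)/2) := by rw [hxdef]; ring
    have hk := key2 x
    have hxpos : (0:ℝ) < x - lm := by rw [hxne]; exact hmin0
    have h4 : (0:ℝ) < 4*(1-u)^2*(x-lm)^2 := by
      have a : (0:ℝ) < (1-u)^2 := pow_pos (by linarith) 2
      have b : (0:ℝ) < (x-lm)^2 := pow_pos hxpos 2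
      nlinarith [mul_pos a b]
    have h6 : 4*(1-u)^2*(x-lm)^2 * (x - 1) < 0 := by
      have := mul_pos h4 (show (0:ℝ) < 1 - x by linarith)
      nlinarith [this]
    have h7 : q x - q lm < 0 := hk ▸ h6
    linarith [h7, hle]
  · linarith [sub_eq_zero.mp h]
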